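/- Let τ be a cyclic gauge invariant tensor with n−2 indices (n ≥ 4) over index set {1,…,D}, invariant under cyclic permutations, and let A be any D×D real matrix. Define the tensor with n indices (before cyclic symmetrization): ρ_{a₁⋯aₙ} = A_{a₁a₂} τ_{a₃a₄⋯aₙ} − A_{a₁a₃} τ_{a₂a₄⋯aₙ}, and let σ_{a₁⋯aₙ} = Σ_{cyclic shifts of (a₁,…,aₙ)} ρ. Then σ is cyclic gauge invariant: σ_{1 2 3 ⋯ n} + σ_{2 1 3 ⋯ n} + σ_{2 3 1 ⋯ n} + ⋯ + σ_{2 3 ⋯ 1 n} = 0 for all index values. -/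

import Mathlib

/-- The tuple obtained from `a` by moving the first index value `a 0` into position `k`
among the remaining (ordered) index values. -/
def insertTuple {D n : ℕ} (a : Fin n → Fin D) (k : ℕ) : Fin n → Fin D :=
  fun j =>
    if j.1 < k then
      (if h : j.1 + 1 < n then a ⟨j.1 + 1, h⟩ else a j)
    else if j.1 = k then a ⟨0, Nat.lt_of_le_of_lt (Nat.zero_le _) j.2⟩
    else a j

/-- `ρ_{a₁⋯aₙ} = A_{a₁a₂} τ_{a₃⋯aₙ} - A_{a₁a₃} τ_{a₂a₄⋯aₙ}` (0-indexed) for a tensor `τ`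
with `m = n - 2` indices. -/
def rhoT {D m : ℕ} (A : Matrix (Fin D) (Fin D) ℝ) (τ : (Fin m → Fin D) → ℝ)
    (a : Fin (m + 2) → Fin D) : ℝ :=
  A (a 0) (a 1) * τ (fun j => a ⟨j.1 + 2, by have := j.2; omega⟩)
    - A (a 0) (a 2) * τ (fun j =>
        if j.1 = 0 then a 1 else a ⟨j.1 + 2, by have := j.2; omega⟩)

/-- `σ` is the sum of `ρ` over the `n` cyclic rotations of its index tuple. -/
def sigmaT {D m : ℕ} (A : Matrix (Fin D) (Fin D) ℝ) (τ : (Fin m → Fin D) → ℝ)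
    (a : Fin (m + 2) → Fin D) : ℝ :=
  ∑ k ∈ Finset.range (m + 2), rhoT A τ (fun j => a (((finRotate (m + 2)) ^ k) j))

namespace Stmt11Aux

variable {α : Type*}

lemma insertIdx_eq (x : α) : ∀ (k : ℕ) (l : List α), k ≤ l.length →
    l.insertIdx k x = l.take k ++ x :: l.drop k
  | 0, l, _ => rfl
  | k+1, [], h => by simp at h
  | k+1, a::l, h => by
      simp only [List.insertIdx_succ_cons, List.take_succ_cons, List.drop_succ_cons,
        List.cons_append]
      rw [insertIdx_eq x k l (by simpa using h)]

lemma rot_insertIdx_le (x : α) (l : List α) (k r : ℕ) (hk : k ≤ l.length) (hr : r ≤ k) :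
    (l.insertIdx k x).rotate r = (l.rotate r).insertIdx (k - r) x := by
  rw [insertIdx_eq x k l hk,
      List.rotate_eq_drop_append_take (l := l.take k ++ x :: l.drop k)
        (by simp; omega),
      List.rotate_eq_drop_append_take (l := l) (by omega),
      insertIdx_eq x (k - r) (l.drop r ++ l.take r) (by simp; omega)]
  rw [List.drop_append, List.take_append,
      List.take_append, List.drop_append]
  have h1 : (l.take k).length = k := by simp; omega
  have h2 : (l.drop r).length = l.length - r := by simp
  rw [h1, h2]
  have e1 : r - k = 0 := by omega
  have e2 : k - r - (l.length - r) = 0 := by omega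
  rw [e1, e2]
  simp only [List.drop_zero, List.take_zero, List.append_nil]
  rw [List.drop_drop]
  have e3 : r + (k - r) = k := by omega
  rw [e3, List.drop_take, List.take_take, min_eq_left hr]
  simp

lemma rot_insertIdx_gt (x : α) (l : List α) (k r : ℕ) (hr : k < r) (hr2 : r ≤ l.length) :
    (l.insertIdx k x).rotate r = (l.rotate (r - 1)).insertIdx (l.length + 1 + k - r) x := by
  have hk : k ≤ l.length := by omega
  rw [insertIdx_eq x k l hk,
      List.rotate_eq_drop_append_take (l := l.take k ++ x :: l.drop k)
        (by simp; omega),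
      List.rotate_eq_drop_append_take (l := l) (by omega),
      insertIdx_eq x (l.length + 1 + k - r) (l.drop (r-1) ++ l.take (r-1)) (by simp; omega)]
  rw [List.drop_append, List.take_append,
      List.take_append, List.drop_append]
  have h1 : (l.take k).length = k := by simp; omega
  have h2 : (l.drop (r-1)).length = l.length - (r - 1) := by simp
  rw [h1, h2]
  have e1 : l.length + 1 + k - r - (l.length - (r-1)) = k := by omega
  rw [e1]
  have e2 : List.drop r (l.take k) = [] := by
    apply List.drop_eq_nil_of_le; simp; omega
  have e3 : List.take (l.length + 1 + k - r) (l.drop (r-1)) = l.drop (r-1) := by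
    apply List.take_of_length_le; simp; omega
  have e7 : List.drop (l.length + 1 + k - r) (l.drop (r-1)) = [] := by
    apply List.drop_eq_nil_of_le; simp; omega
  rw [e2, e3, e7]
  have e4 : r - k = (r - k - 1) + 1 := by omega
  rw [e4]
  simp only [List.drop_succ_cons, List.take_succ_cons, List.nil_append]
  have m1 : r ⊓ k = k := min_eq_right hr.le
  have m2 : k ⊓ (r-1) = k := min_eq_left (by omega)
  simp only [List.take_take, m1, m2]
  rw [List.drop_drop, List.drop_take]
  have e5 : k + (r - k - 1) = r - 1 := by omega
  have e6 : r - k - 1 = r - 1 - k := by omega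
  rw [e5, e6]
  simp

variable {D : ℕ}


/-- list version of ρ -/
def Rho (A : Matrix (Fin D) (Fin D) ℝ) (T : List (Fin D) → ℝ) : List (Fin D) → ℝ
  | x :: y :: z :: t => A x y * T (z :: t) - A x z * T (y :: t)
  | _ => 0

section Core

variable (p : ℕ) (A : Matrix (Fin D) (Fin D) ℝ) (T : List (Fin D) → ℝ)

lemma hcgi' (Hrot : ∀ l : List (Fin D), l.length = p + 2 → T (l.rotate 1) = T l)
    (Hcgi : ∀ (x : Fin D) (l : List (Fin D)), l.length = p + 1 →
      ∑ k ∈ Finset.range (p + 1), T (l.insertIdx k x) = 0)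
    (x : Fin D) (l : List (Fin D)) (hl : l.length = p + 1) :
    ∑ k ∈ Finset.range (p + 1), T (l.insertIdx (k + 1) x) = 0 := by
  have h0 := Hcgi x l hl
  have h1 : ∑ k ∈ Finset.range (p + 2), T (l.insertIdx k x)
      = ∑ k ∈ Finset.range (p + 1), T (l.insertIdx (k + 1) x) + T (l.insertIdx 0 x) :=
    Finset.sum_range_succ' _ _
  have h2 : ∑ k ∈ Finset.range (p + 2), T (l.insertIdx k x)
      = ∑ k ∈ Finset.range (p + 1), T (l.insertIdx k x) + T (l.insertIdx (p + 1) x) :=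
    Finset.sum_range_succ _ _
  have h3 : T (l.insertIdx (p + 1) x) = T (l.insertIdx 0 x) := by
    rw [List.insertIdx_zero, ← hl, List.insertIdx_length_self]
    rw [show l ++ [x] = (x :: l).rotate 1 by simp [List.rotate_cons_succ]]
    exact Hrot _ (by simp [hl])
  rw [h0, h3] at h2
  rw [h2] at h1
  linarith

lemma Fcalc (Hrot : ∀ l : List (Fin D), l.length = p + 2 → T (l.rotate 1) = T l)
    (Hcgi : ∀ (x : Fin D) (l : List (Fin D)), l.length = p + 1 →
      ∑ k ∈ Finset.range (p + 1), T (l.insertIdx k x) = 0)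
    (x : Fin D) (u0 u1 u2 : Fin D) (v : List (Fin D)) (hv : v.length = p) :
    ∑ j ∈ Finset.range (p + 4), Rho A T ((u0 :: u1 :: u2 :: v).insertIdx j x)
      = A x u0 * T (u1 :: u2 :: v) - A x u1 * T (u0 :: u2 :: v) := by
  rw [Finset.sum_range_succ' _ (p+3), Finset.sum_range_succ' _ (p+2),
      Finset.sum_range_succ' _ (p+1)]
  have f0 : Rho A T ((u0 :: u1 :: u2 :: v).insertIdx 0 x)
      = A x u0 * T (u1 :: u2 :: v) - A x u1 * T (u0 :: u2 :: v) := by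
    rw [List.insertIdx_zero]; rfl
  have f1 : Rho A T ((u0 :: u1 :: u2 :: v).insertIdx 1 x)
      = A u0 x * T (u1 :: u2 :: v) - A u0 u1 * T (x :: u2 :: v) := by
    simp only [List.insertIdx_succ_cons, List.insertIdx_zero]; rfl
  have f2 : Rho A T ((u0 :: u1 :: u2 :: v).insertIdx 2 x)
      = A u0 u1 * T (x :: u2 :: v) - A u0 x * T (u1 :: u2 :: v) := by
    simp only [List.insertIdx_succ_cons, List.insertIdx_zero]; rfl
  have frest : ∀ j, Rho A T ((u0 :: u1 :: u2 :: v).insertIdx (j + 1 + 1 + 1) x)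
      = A u0 u1 * T ((u2 :: v).insertIdx (j + 1) x)
        - A u0 u2 * T ((u1 :: v).insertIdx (j + 1) x) := by
    intro j
    simp only [List.insertIdx_succ_cons]
    rfl
  simp only [frest, f0, f1, f2]
  rw [Finset.sum_sub_distrib, ← Finset.mul_sum, ← Finset.mul_sum,
      hcgi' p T Hrot Hcgi x (u2 :: v) (by simp [hv]),
      hcgi' p T Hrot Hcgi x (u1 :: v) (by simp [hv])]
  ring

lemma core (Hrot : ∀ l : List (Fin D), l.length = p + 2 → T (l.rotate 1) = T l)
    (Hcgi : ∀ (x : Fin D) (l : List (Fin D)), l.length = p + 1 →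
      ∑ k ∈ Finset.range (p + 1), T (l.insertIdx k x) = 0)
    (x : Fin D) (l : List (Fin D)) (hl : l.length = p + 3) :
    ∑ k ∈ Finset.range (p + 3), ∑ r ∈ Finset.range (p + 4),
      Rho A T ((l.insertIdx k x).rotate r) = 0 := by
  -- Step 1: reindex the double sum
  have step1 : ∑ k ∈ Finset.range (p + 3), ∑ r ∈ Finset.range (p + 4),
      Rho A T ((l.insertIdx k x).rotate r)
      = ∑ s ∈ Finset.range (p + 3), ∑ j ∈ Finset.range (p + 4),
        Rho A T ((l.rotate s).insertIdx j x) := by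
    rw [← Finset.sum_product', ← Finset.sum_product']
    refine Finset.sum_nbij'
      (fun q => if q.2 ≤ q.1 then (q.2, q.1 - q.2) else (q.2 - 1, p + 4 + q.1 - q.2))
      (fun q => if q.1 + q.2 ≤ p + 2 then (q.1 + q.2, q.1) else (q.1 + q.2 - p - 3, q.1 + 1))
      ?_ ?_ ?_ ?_ ?_
    · rintro ⟨k, r⟩ hq
      simp only [Finset.mem_product, Finset.mem_range] at hq ⊢
      split_ifs <;> omega
    · rintro ⟨s, j⟩ hq
      simp only [Finset.mem_product, Finset.mem_range] at hq ⊢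
      split_ifs <;> omega
    · rintro ⟨k, r⟩ hq
      simp only [Finset.mem_product, Finset.mem_range] at hq
      dsimp only
      rcases le_or_gt r k with h | h
      · rw [if_pos h]
        dsimp only
        rw [if_pos (show r + (k - r) ≤ p + 2 by omega)]
        simp only [Prod.mk.injEq]
        exact ⟨by first | trivial | omega, by first | trivial | omega⟩
      · rw [if_neg (show ¬ r ≤ k by omega)]
        dsimp only
        rw [if_neg (show ¬ (r - 1 + (p + 4 + k - r) ≤ p + 2) by omega)]
        simp only [Prod.mk.injEq]
        exact ⟨by first | trivial | omega, by first | trivial | omega⟩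
    · rintro ⟨s, j⟩ hq
      simp only [Finset.mem_product, Finset.mem_range] at hq
      dsimp only
      rcases le_or_gt (s + j) (p + 2) with h | h
      · rw [if_pos h]
        dsimp only
        rw [if_pos (show s ≤ s + j by omega)]
        simp only [Prod.mk.injEq]
        exact ⟨by first | trivial | omega, by first | trivial | omega⟩
      · rw [if_neg (show ¬ s + j ≤ p + 2 by omega)]
        dsimp only
        rw [if_neg (show ¬ s + 1 ≤ s + j - p - 3 by omega)]
        simp only [Prod.mk.injEq]
        exact ⟨by first | trivial | omega, by first | trivial | omega⟩
    · rintro ⟨k, r⟩ hq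
      simp only [Finset.mem_product, Finset.mem_range] at hq
      dsimp only
      by_cases h : r ≤ k
      · simp only [if_pos h]
        rw [rot_insertIdx_le x l k r (by omega) h]
      · simp only [if_neg h]
        rw [rot_insertIdx_gt x l k r (by omega) (by omega), hl]
  rw [step1]
  -- Step 2: inner sums via Fcalc, telescoping
  have decomp : ∀ s : ℕ, ∃ c0 c1 c2 v, l.rotate s = c0 :: c1 :: c2 :: v ∧
      (v : List (Fin D)).length = p := by
    intro s
    have hlen : (l.rotate s).length = p + 3 := by simp [hl]
    rcases e : l.rotate s with _ | ⟨c0, _ | ⟨c1, _ | ⟨c2, v⟩⟩⟩ <;>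
      rw [e] at hlen <;> simp at hlen
    exact ⟨c0, c1, c2, v, rfl, hlen⟩
  set G : ℕ → ℝ := fun s => A x ((l.rotate s).getD 0 x) * T ((l.rotate s).tail) with hG
  have step2 : ∀ s ∈ Finset.range (p + 3),
      ∑ j ∈ Finset.range (p + 4), Rho A T ((l.rotate s).insertIdx j x) = G s - G (s + 1) := by
    intro s _
    obtain ⟨c0, c1, c2, v, e, hv⟩ := decomp s
    have e1 : l.rotate (s + 1) = c1 :: c2 :: (v ++ [c0]) := by
      rw [← List.rotate_rotate, e]
      simp [List.rotate_cons_succ]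
    rw [e, Fcalc p A T Hrot Hcgi x c0 c1 c2 v hv, hG]
    simp only [e, e1, List.getD_cons_zero, List.tail_cons]
    have : T (c2 :: (v ++ [c0])) = T (c0 :: c2 :: v) := by
      rw [show c2 :: (v ++ [c0]) = (c0 :: c2 :: v).rotate 1 by simp [List.rotate_cons_succ]]
      exact Hrot _ (by simp [hv])
    rw [this]
  rw [Finset.sum_congr rfl step2, Finset.sum_range_sub' G (p + 3)]
  have : G (p + 3) = G 0 := by
    rw [hG]
    simp only [List.rotate_zero, ← hl, List.rotate_length]
  rw [this, sub_self]

end Core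



noncomputable def Tl {m : ℕ} (τ : (Fin m → Fin D) → ℝ) (l : List (Fin D)) : ℝ :=
  if h : l.length = m then τ (fun j => l.get (Fin.cast h.symm j)) else 0

lemma tl_ofFn {m : ℕ} (τ : (Fin m → Fin D) → ℝ) (c : Fin m → Fin D) :
    Tl τ (List.ofFn c) = τ c := by
  rw [Tl, dif_pos (List.length_ofFn (f := c))]
  congr 1
  funext j
  rw [List.get_ofFn]
  rfl

lemma list_to_fn (l : List (Fin D)) (q : ℕ) (h : l.length = q) :
    ∃ c : Fin q → Fin D, l = List.ofFn c := by
  refine ⟨fun j => l.get (Fin.cast h.symm j), ?_⟩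
  apply List.ext_getElem
  · simp [h]
  · intro i h1 h2
    simp [List.getElem_ofFn]

open Fin.NatCast in
lemma finRotate_pow {n : ℕ} : ∀ (k : ℕ) (j : Fin (n + 1)),
    ((finRotate (n + 1)) ^ k) j = j + (k : Fin (n + 1)) := by
  intro k
  induction k with
  | zero => intro j; simp
  | succ k ih =>
    intro j
    rw [pow_succ, Equiv.Perm.mul_apply, finRotate_succ_apply, ih]
    rw [Nat.cast_add, Nat.cast_one, add_assoc, add_comm 1 (k : Fin (n+1)), ← add_assoc]

lemma ofFn_rot {n : ℕ} (b : Fin (n + 1) → Fin D) (k : ℕ) :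
    List.ofFn (fun j => b ((finRotate (n + 1) ^ k) j)) = (List.ofFn b).rotate k := by
  apply List.ext_getElem
  · simp
  · intro i h1 h2
    rw [List.getElem_rotate]
    simp only [List.getElem_ofFn, finRotate_pow]
    congr 1
    rw [Fin.ext_iff, Fin.add_def, Fin.val_natCast]
    simp only [List.length_ofFn]
    exact (Nat.add_mod_mod _ _ _)

lemma ofFn_insertTuple {q : ℕ} (a : Fin (q + 1) → Fin D) (k : ℕ) (hk : k ≤ q) :
    List.ofFn (insertTuple a k)
      = (List.ofFn fun i : Fin q => a i.succ).insertIdx k (a 0) := by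
  apply List.ext_getElem
  · rw [List.length_insertIdx_of_le_length (by simpa using hk)]
    simp
  · intro i h1 h2
    simp only [List.getElem_ofFn]
    rcases lt_trichotomy i k with h | h | h
    · rw [List.getElem_insertIdx_of_lt h]
      simp only [List.getElem_ofFn]
      have hi1 : i + 1 < q + 1 := by omega
      simp only [insertTuple, if_pos h, dif_pos hi1]
      congr 1
    · subst h
      rw [List.getElem_insertIdx_self]
      simp only [insertTuple, lt_irrefl, if_neg (lt_irrefl i), if_pos rfl]
      congr 1
    · obtain ⟨t, rfl⟩ : ∃ t, i = k + t + 1 := ⟨i - k - 1, by omega⟩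
      rw [List.getElem_insertIdx_add_succ _ _ _ _ (by simp at h1 ⊢; omega)]
      simp only [List.getElem_ofFn]
      simp only [insertTuple, if_neg (by omega : ¬ (k + t + 1 < k)),
        if_neg (by omega : ¬ (k + t + 1 = k))]
      congr 1

lemma rho_bridge {p : ℕ} (A : Matrix (Fin D) (Fin D) ℝ) (τ : (Fin (p + 2) → Fin D) → ℝ)
    (a : Fin (p + 4) → Fin D) :
    rhoT A τ a = Rho A (Tl τ) (List.ofFn a) := by
  have e : List.ofFn a = a 0 :: a 1 :: a 2 :: List.ofFn (fun i : Fin (p + 1) => a i.succ.succ.succ) := by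
    rw [List.ofFn_succ, List.ofFn_succ, List.ofFn_succ]
    congr 1
  rw [e]
  show _ = A (a 0) (a 1) * Tl τ (a 2 :: _) - A (a 0) (a 2) * Tl τ (a 1 :: _)
  have h1 : (a 2 :: List.ofFn (fun i : Fin (p + 1) => a i.succ.succ.succ))
      = List.ofFn (fun j : Fin (p + 2) => a ⟨j.1 + 2, by have := j.2; omega⟩) := by
    apply List.ext_getElem
    · simp
    · intro i hA hB
      match i with
      | 0 =>
        simp only [List.getElem_cons_zero, List.getElem_ofFn]
        congr 1
      | (t+1) =>
        simp only [List.getElem_cons_succ, List.getElem_ofFn]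
        congr 1
  have h2 : (a 1 :: List.ofFn (fun i : Fin (p + 1) => a i.succ.succ.succ))
      = List.ofFn (fun j : Fin (p + 2) =>
          if j.1 = 0 then a 1 else a ⟨j.1 + 2, by have := j.2; omega⟩) := by
    apply List.ext_getElem
    · simp
    · intro i hA hB
      match i with
      | 0 =>
        simp only [List.getElem_cons_zero, List.getElem_ofFn]
        norm_num
      | (t+1) =>
        simp only [List.getElem_cons_succ, List.getElem_ofFn]
        rw [if_neg (by simp)]
        congr 1
  rw [h1, h2, tl_ofFn, tl_ofFn, rhoT]

end Stmt11Aux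

/-- If `τ` is a cyclically symmetric, cyclic gauge invariant tensor with `m = n - 2 ≥ 2`
indices and `A` is any matrix, then the cyclic symmetrization `σ` of
`ρ_{a₁⋯aₙ} = A_{a₁a₂} τ_{a₃⋯aₙ} - A_{a₁a₃} τ_{a₂a₄⋯aₙ}` is cyclic gauge invariant. -/
theorem stmt11 {D m : ℕ} (hm : 2 ≤ m) (A : Matrix (Fin D) (Fin D) ℝ)
    (τ : (Fin m → Fin D) → ℝ)
    (hcyc : ∀ b : Fin m → Fin D, τ b = τ (fun j => b (finRotate m j)))
    (hCGI : ∀ b : Fin m → Fin D, ∑ k ∈ Finset.range (m - 1), τ (insertTuple b k) = 0) :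
    ∀ a : Fin (m + 2) → Fin D,
      ∑ k ∈ Finset.range (m + 2 - 1), sigmaT A τ (insertTuple a k) = 0 := by
  obtain ⟨p, rfl⟩ : ∃ p, m = p + 2 := ⟨m - 2, by omega⟩
  intro a
  have Hrot : ∀ l : List (Fin D), l.length = p + 2 → Stmt11Aux.Tl τ (l.rotate 1) = Stmt11Aux.Tl τ l := by
    intro l hlen
    obtain ⟨c, rfl⟩ := Stmt11Aux.list_to_fn l (p + 2) hlen
    rw [← Stmt11Aux.ofFn_rot (n := p + 1) c 1, Stmt11Aux.tl_ofFn, Stmt11Aux.tl_ofFn]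
    simp only [pow_one]
    exact (hcyc c).symm
  have Hcgi : ∀ (x : Fin D) (l : List (Fin D)), l.length = p + 1 →
      ∑ k ∈ Finset.range (p + 1), Stmt11Aux.Tl τ (l.insertIdx k x) = 0 := by
    intro x l hlen
    obtain ⟨c, rfl⟩ := Stmt11Aux.list_to_fn l (p + 1) hlen
    calc ∑ k ∈ Finset.range (p + 1), Stmt11Aux.Tl τ ((List.ofFn c).insertIdx k x)
        = ∑ k ∈ Finset.range (p + 1), τ (insertTuple (Fin.cons x c) k) := by
          apply Finset.sum_congr rfl
          intro k hk
          rw [← Stmt11Aux.tl_ofFn τ (insertTuple (Fin.cons x c) k),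
            Stmt11Aux.ofFn_insertTuple (Fin.cons x c) k
              (by simp only [Finset.mem_range] at hk; omega),
            Fin.cons_zero]
          simp only [Fin.cons_succ]
      _ = 0 := hCGI (Fin.cons x c)
  have key : ∀ k ∈ Finset.range (p + 3), sigmaT A τ (insertTuple a k)
      = ∑ r ∈ Finset.range (p + 4), Stmt11Aux.Rho A (Stmt11Aux.Tl τ)
          (((List.ofFn fun i : Fin (p + 3) => a i.succ).insertIdx k (a 0)).rotate r) := by
    intro k hk
    rw [sigmaT]
    apply Finset.sum_congr rfl
    intro r _
    rw [Stmt11Aux.rho_bridge, Stmt11Aux.ofFn_rot (n := p + 3)]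
    rw [Stmt11Aux.ofFn_insertTuple a k (by simp only [Finset.mem_range] at hk; omega)]
  show ∑ k ∈ Finset.range (p + 3), sigmaT A τ (insertTuple a k) = 0
  rw [Finset.sum_congr rfl key]
  exact Stmt11Aux.core p A (Stmt11Aux.Tl τ) Hrot Hcgi (a 0) _ (by simp)
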